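/- Let N ≥ 1, let T be a countable nonempty bounded subset of ℝ^N, and let φ : ℝ → ℝ be L-Lipschitz with φ(0) = 0 and L ≥ 0. Then E_σ [ sup_{t ∈ T} Σ_{i=1}^N σ_i · φ(t_i) ] ≤ L · E_σ [ sup_{t ∈ T} Σ_{i=1}^N σ_i · t_i ], where σ = (σ₁,…,σ_N) is uniform on {−1,+1}^N (i.e., the σ_i are independent Rademacher variables). -/

import Mathlib

open Real

noncomputable section TalAux

/-- real sign of a boolean -/
def rsign (b : Bool) : ℝ := if b then 1 else -1

lemma abs_rsign (b : Bool) : |rsign b| = 1 := by cases b <;> simp [rsign]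

lemma rsign_not (b : Bool) : rsign (!b) = - rsign b := by cases b <;> simp [rsign]

/-- key two-point sup lemma -/
lemma key_sup {α : Type*} (S : Set α) (hS : S.Nonempty)
    (a c d : α → ℝ)
    (h1 : BddAbove ((fun t => a t + d t) '' S))
    (h2 : BddAbove ((fun t => a t - d t) '' S))
    (hcd : ∀ s ∈ S, ∀ u ∈ S, |c s - c u| ≤ |d s - d u|) :
    sSup ((fun t => a t + c t) '' S) + sSup ((fun t => a t - c t) '' S)
      ≤ sSup ((fun t => a t + d t) '' S) + sSup ((fun t => a t - d t) '' S) := by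
  set C := sSup ((fun t => a t + d t) '' S) + sSup ((fun t => a t - d t) '' S) with hC
  have key : ∀ s ∈ S, ∀ u ∈ S, (a s + c s) + (a u - c u) ≤ C := by
    intro s hs u hu
    have h := hcd s hs u hu
    have hcs : c s - c u ≤ |d s - d u| := le_trans (le_abs_self _) h
    rcases le_total (d u) (d s) with hd | hd
    · have h1' : a s + d s ≤ sSup ((fun t => a t + d t) '' S) :=
        le_csSup h1 ⟨s, hs, rfl⟩
      have h2' : a u - d u ≤ sSup ((fun t => a t - d t) '' S) :=
        le_csSup h2 ⟨u, hu, rfl⟩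
      have : |d s - d u| = d s - d u := abs_of_nonneg (by linarith)
      rw [this] at hcs
      linarith
    · have h1' : a u + d u ≤ sSup ((fun t => a t + d t) '' S) :=
        le_csSup h1 ⟨u, hu, rfl⟩
      have h2' : a s - d s ≤ sSup ((fun t => a t - d t) '' S) :=
        le_csSup h2 ⟨s, hs, rfl⟩
      have : |d s - d u| = d u - d s := by
        rw [abs_sub_comm]; exact abs_of_nonneg (by linarith)
      rw [this] at hcs
      linarith
  have hne1 : ((fun t => a t + c t) '' S).Nonempty := hS.image _
  have hne2 : ((fun t => a t - c t) '' S).Nonempty := hS.image _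
  have hXle : sSup ((fun t => a t + c t) '' S) ≤ C - sSup ((fun t => a t - c t) '' S) := by
    apply csSup_le hne1
    rintro x ⟨s, hs, rfl⟩
    have : sSup ((fun t => a t - c t) '' S) ≤ C - (a s + c s) := by
      apply csSup_le hne2
      rintro y ⟨u, hu, rfl⟩
      have := key s hs u hu
      dsimp only
      linarith
    dsimp only
    linarith
  linarith

lemma mul_sSup_image (L : ℝ) (hL : 0 ≤ L) (s : Set ℝ) (hs : s.Nonempty) (hb : BddAbove s) :
    sSup ((fun x => L * x) '' s) = L * sSup s := by
  rcases eq_or_lt_of_le hL with h0 | h0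
  · obtain ⟨x, hx⟩ := hs
    have : (fun x => L * x) '' s = {0} := by
      ext r
      constructor
      · rintro ⟨y, hy, rfl⟩; simp [← h0]
      · rintro rfl; exact ⟨x, hx, by simp [← h0]⟩
    rw [this, ← h0]; simp
  · apply le_antisymm
    · apply csSup_le (hs.image _)
      rintro r ⟨x, hx, rfl⟩
      exact mul_le_mul_of_nonneg_left (le_csSup hb hx) hL
    · have hbimg : BddAbove ((fun x => L * x) '' s) := by
        obtain ⟨M, hM⟩ := hb
        refine ⟨L * M, ?_⟩
        rintro r ⟨x, hx, rfl⟩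
        exact mul_le_mul_of_nonneg_left (hM hx) hL
      rw [mul_comm, ← le_div_iff₀ h0]
      apply csSup_le hs
      intro x hx
      rw [le_div_iff₀ h0, mul_comm]
      exact le_csSup hbimg ⟨x, hx, rfl⟩

variable {N : ℕ}

/-- the one-coordinate contraction step -/
lemma one_step (T : Set (Fin N → ℝ)) (hTne : T.Nonempty)
    (B : ℝ) (hB : ∀ t ∈ T, ∀ i, |t i| ≤ B)
    (φ : ℝ → ℝ) (L : ℝ) (hL : 0 ≤ L)
    (hφ : ∀ s t : ℝ, |φ s - φ t| ≤ L * |s - t|)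
    (ψ : Fin N → ℝ → ℝ) (hψ : ∀ i x, |ψ i x| ≤ L * |x|)
    (j : Fin N) (hj : ψ j = φ) :
    (∑ σ : Fin N → Bool, sSup ((fun t => ∑ i, rsign (σ i) * ψ i (t i)) '' T))
      ≤ ∑ σ : Fin N → Bool,
          sSup ((fun t => ∑ i, rsign (σ i) * (Function.update ψ j (fun x => L * x)) i (t i)) '' T) := by
  classical
  set ψ' := Function.update ψ j (fun x : ℝ => L * x) with hψ'def
  have hψ' : ∀ i x, |ψ' i x| ≤ L * |x| := by
    intro i x
    by_cases h : i = j
    · subst h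
      simp only [ψ', Function.update_self]
      rw [abs_mul, abs_of_nonneg hL]
    · simp only [ψ', Function.update_of_ne h]
      exact hψ i x
  -- boundedness of images
  have hbdd : ∀ (χ : Fin N → ℝ → ℝ), (∀ i x, |χ i x| ≤ L * |x|) → ∀ σ : Fin N → Bool,
      BddAbove ((fun t => ∑ i, rsign (σ i) * χ i (t i)) '' T) := by
    intro χ hχ σ
    refine ⟨∑ _i : Fin N, L * B, ?_⟩
    rintro r ⟨t, ht, rfl⟩
    apply Finset.sum_le_sum
    intro i _
    calc rsign (σ i) * χ i (t i) ≤ |rsign (σ i) * χ i (t i)| := le_abs_self _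
      _ = |χ i (t i)| := by rw [abs_mul, abs_rsign, one_mul]
      _ ≤ L * |t i| := hχ i (t i)
      _ ≤ L * B := mul_le_mul_of_nonneg_left (hB t ht i) hL
  -- flip
  set flip : (Fin N → Bool) → (Fin N → Bool) := fun σ => Function.update σ j (!σ j) with hflip
  have hinv : Function.Involutive flip := by
    intro σ; funext i
    by_cases h : i = j
    · subst h; simp [flip]
    · simp [flip, Function.update_of_ne h]
  -- partial sum
  set A : (Fin N → Bool) → (Fin N → ℝ) → ℝ :=
    fun σ t => ∑ i ∈ Finset.univ.erase j, rsign (σ i) * ψ i (t i) with hA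
  have hAflip : ∀ σ, A (flip σ) = A σ := by
    intro σ; funext t
    apply Finset.sum_congr rfl
    intro i hi
    have : i ≠ j := Finset.ne_of_mem_erase hi
    simp [flip, Function.update_of_ne this]
  -- function decompositions
  have hd1 : ∀ σ : Fin N → Bool, (fun t => ∑ i, rsign (σ i) * ψ i (t i))
      = fun t => A σ t + rsign (σ j) * φ (t j) := by
    intro σ; funext t
    rw [← Finset.sum_erase_add _ _ (Finset.mem_univ j), hj]
  have hd2 : ∀ σ : Fin N → Bool, (fun t => ∑ i, rsign (flip σ i) * ψ i (t i))
      = fun t => A σ t - rsign (σ j) * φ (t j) := by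
    intro σ; funext t
    rw [← Finset.sum_erase_add _ _ (Finset.mem_univ j), hj]
    have h1 : ∑ i ∈ Finset.univ.erase j, rsign (flip σ i) * ψ i (t i) = A σ t := by
      apply Finset.sum_congr rfl
      intro i hi
      have : i ≠ j := Finset.ne_of_mem_erase hi
      simp [flip, Function.update_of_ne this]
    have h2 : rsign (flip σ j) = - rsign (σ j) := by
      simp only [flip, Function.update_self]; exact rsign_not _
    rw [h1, h2]; ring
  have hd3 : ∀ σ : Fin N → Bool, (fun t => ∑ i, rsign (σ i) * ψ' i (t i))
      = fun t => A σ t + rsign (σ j) * (L * t j) := by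
    intro σ; funext t
    rw [← Finset.sum_erase_add _ _ (Finset.mem_univ j)]
    congr 1
    · apply Finset.sum_congr rfl
      intro i hi
      have : i ≠ j := Finset.ne_of_mem_erase hi
      simp [ψ', Function.update_of_ne this]
    · simp [ψ']
  have hd4 : ∀ σ : Fin N → Bool, (fun t => ∑ i, rsign (flip σ i) * ψ' i (t i))
      = fun t => A σ t - rsign (σ j) * (L * t j) := by
    intro σ; funext t
    rw [← Finset.sum_erase_add _ _ (Finset.mem_univ j)]
    have h1 : ∑ i ∈ Finset.univ.erase j, rsign (flip σ i) * ψ' i (t i) = A σ t := by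
      apply Finset.sum_congr rfl
      intro i hi
      have : i ≠ j := Finset.ne_of_mem_erase hi
      simp [flip, ψ', Function.update_of_ne this]
    have h2 : rsign (flip σ j) = - rsign (σ j) := by
      simp only [flip, Function.update_self]; exact rsign_not _
    rw [h1, h2]
    simp [ψ']
    ring
  -- pointwise pair inequality
  set F : (Fin N → Bool) → ℝ := fun σ => sSup ((fun t => ∑ i, rsign (σ i) * ψ i (t i)) '' T)
    with hF
  set F' : (Fin N → Bool) → ℝ := fun σ => sSup ((fun t => ∑ i, rsign (σ i) * ψ' i (t i)) '' T)
    with hF'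
  have hpair : ∀ σ, F σ + F (flip σ) ≤ F' σ + F' (flip σ) := by
    intro σ
    have eF1 : F σ = sSup ((fun t => A σ t + rsign (σ j) * φ (t j)) '' T) := by
      simp only [hF]; rw [hd1 σ]
    have eF2 : F (flip σ) = sSup ((fun t => A σ t - rsign (σ j) * φ (t j)) '' T) := by
      simp only [hF]; rw [hd2 σ]
    have eF3 : F' σ = sSup ((fun t => A σ t + rsign (σ j) * (L * t j)) '' T) := by
      simp only [hF']; rw [hd3 σ]
    have eF4 : F' (flip σ) = sSup ((fun t => A σ t - rsign (σ j) * (L * t j)) '' T) := by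
      simp only [hF']; rw [hd4 σ]
    rw [eF1, eF2, eF3, eF4]
    apply key_sup T hTne (A σ) (fun t => rsign (σ j) * φ (t j))
      (fun t => rsign (σ j) * (L * t j))
      (by rw [← hd3 σ]; exact hbdd ψ' hψ' σ)
      (by rw [← hd4 σ]; exact hbdd ψ' hψ' (flip σ))
    · intro s hs u hu
      have e1 : |rsign (σ j) * φ (s j) - rsign (σ j) * φ (u j)| = |φ (s j) - φ (u j)| := by
        rw [← mul_sub, abs_mul, abs_rsign, one_mul]
      have e2 : |rsign (σ j) * (L * s j) - rsign (σ j) * (L * u j)| = L * |s j - u j| := by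
        rw [← mul_sub, abs_mul, abs_rsign, one_mul, ← mul_sub, abs_mul, abs_of_nonneg hL]
      rw [e1, e2]
      exact hφ (s j) (u j)
  -- sum over flip pairs
  have hsumflip : ∀ (G : (Fin N → Bool) → ℝ),
      ∑ σ : Fin N → Bool, G (flip σ) = ∑ σ : Fin N → Bool, G σ :=
    fun G => Equiv.sum_comp (hinv.toPerm flip) G
  have h2F : (2:ℝ) * ∑ σ : Fin N → Bool, F σ = ∑ σ : Fin N → Bool, (F σ + F (flip σ)) := by
    rw [Finset.sum_add_distrib, hsumflip F, two_mul]
  have h2F' : (2:ℝ) * ∑ σ : Fin N → Bool, F' σ = ∑ σ : Fin N → Bool, (F' σ + F' (flip σ)) := by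
    rw [Finset.sum_add_distrib, hsumflip F', two_mul]
  have h2le : (2:ℝ) * ∑ σ : Fin N → Bool, F σ ≤ 2 * ∑ σ : Fin N → Bool, F' σ := by
    rw [h2F, h2F']
    exact Finset.sum_le_sum (fun σ _ => hpair σ)
  linarith

end TalAux

/-- **Talagrand contraction lemma for Rademacher averages.**
For `N ≥ 1`, a countable nonempty bounded set `T ⊆ ℝ^N`, and an `L`-Lipschitz function
`φ : ℝ → ℝ` with `φ(0) = 0` and `L ≥ 0`,
`E_σ [sup_{t ∈ T} Σᵢ σᵢ · φ(tᵢ)] ≤ L · E_σ [sup_{t ∈ T} Σᵢ σᵢ · tᵢ]`,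
where the expectation over the independent uniform Rademacher signs `σ ∈ {−1,+1}^N`
is written as the average over all `2^N` sign patterns. -/
theorem talagrand_contraction
    {N : ℕ} (hN : 1 ≤ N)
    (T : Set (Fin N → ℝ)) (hTc : T.Countable) (hTne : T.Nonempty)
    (hTbdd : ∃ B : ℝ, ∀ t ∈ T, ∀ i, |t i| ≤ B)
    (φ : ℝ → ℝ) (L : ℝ) (hL : 0 ≤ L)
    (hφ : ∀ s t : ℝ, |φ s - φ t| ≤ L * |s - t|) (hφ0 : φ 0 = 0) :
    (∑ σ : Fin N → Bool,
        sSup {r : ℝ | ∃ t ∈ T, r = ∑ i, (if σ i then (1 : ℝ) else -1) * φ (t i)}) / 2 ^ N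
      ≤ L *
        ((∑ σ : Fin N → Bool,
          sSup {r : ℝ | ∃ t ∈ T, r = ∑ i, (if σ i then (1 : ℝ) else -1) * t i}) / 2 ^ N) := by
  classical
  obtain ⟨B, hB⟩ := hTbdd
  -- rewrite sets as images
  have himg : ∀ (h : (Fin N → ℝ) → ℝ),
      {r : ℝ | ∃ t ∈ T, r = h t} = h '' T := by
    intro h; ext r
    exact ⟨fun ⟨t, ht, e⟩ => ⟨t, ht, e.symm⟩, fun ⟨t, ht, e⟩ => ⟨t, ht, e.symm⟩⟩
  have hφb : ∀ x, |φ x| ≤ L * |x| := by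
    intro x
    have := hφ x 0
    simpa [hφ0] using this
  -- the interpolating families
  set ψS : Finset (Fin N) → (Fin N → ℝ → ℝ) :=
    fun S i => if i ∈ S then (fun x : ℝ => L * x) else φ with hψS
  have hψSb : ∀ S : Finset (Fin N), ∀ i x, |ψS S i x| ≤ L * |x| := by
    intro S i x
    by_cases h : i ∈ S
    · simp only [ψS, if_pos h]
      rw [abs_mul, abs_of_nonneg hL]
    · simp only [ψS, if_neg h]
      exact hφb x
  have main : ∀ S : Finset (Fin N),
      (∑ σ : Fin N → Bool, sSup ((fun t => ∑ i, rsign (σ i) * φ (t i)) '' T))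
        ≤ ∑ σ : Fin N → Bool, sSup ((fun t => ∑ i, rsign (σ i) * ψS S i (t i)) '' T) := by
    intro S
    induction S using Finset.induction_on with
    | empty => simp [ψS]
    | insert _ _ hj =>
      rename_i j S hIH
      refine le_trans hIH ?_
      have hupd : ψS (insert j S) = Function.update (ψS S) j (fun x : ℝ => L * x) := by
        funext i x
        by_cases h : i = j
        · subst h; simp [ψS, Function.update_self]
        · simp [ψS, Function.update_of_ne h, Finset.mem_insert, h]
      rw [hupd]
      exact one_step T hTne B hB φ L hL hφ (ψS S) (hψSb S) j (by simp [ψS, hj])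
  have hfin := main Finset.univ
  -- convert RHS
  have hbddM : ∀ σ : Fin N → Bool, BddAbove ((fun t => ∑ i, rsign (σ i) * t i) '' T) := by
    intro σ
    refine ⟨∑ _i : Fin N, |B|, ?_⟩
    rintro r ⟨t, ht, rfl⟩
    apply Finset.sum_le_sum
    intro i _
    calc rsign (σ i) * t i ≤ |rsign (σ i) * t i| := le_abs_self _
      _ = |t i| := by rw [abs_mul, abs_rsign, one_mul]
      _ ≤ B := hB t ht i
      _ ≤ |B| := le_abs_self B
  have hRHS : ∀ σ : Fin N → Bool,
      sSup ((fun t => ∑ i, rsign (σ i) * ψS Finset.univ i (t i)) '' T)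
        = L * sSup ((fun t => ∑ i, rsign (σ i) * t i) '' T) := by
    intro σ
    have e1 : (fun t : Fin N → ℝ => ∑ i, rsign (σ i) * ψS Finset.univ i (t i))
        = (fun x => L * x) ∘ (fun t => ∑ i, rsign (σ i) * t i) := by
      funext t
      simp only [ψS, Finset.mem_univ, if_pos, Function.comp_apply, Finset.mul_sum]
      apply Finset.sum_congr rfl
      intro i _
      ring
    rw [e1, Set.image_comp]
    exact mul_sSup_image L hL _ (hTne.image _) (hbddM σ)
  -- now put everything together
  have hε : ∀ σ : Fin N → Bool, ∀ g : (Fin N → ℝ) → Fin N → ℝ, True := fun _ _ => trivial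
  have hLHSset : ∀ σ : Fin N → Bool,
      {r : ℝ | ∃ t ∈ T, r = ∑ i, (if σ i then (1 : ℝ) else -1) * φ (t i)}
        = (fun t => ∑ i, rsign (σ i) * φ (t i)) '' T := by
    intro σ
    rw [himg]
    rfl
  have hRHSset : ∀ σ : Fin N → Bool,
      {r : ℝ | ∃ t ∈ T, r = ∑ i, (if σ i then (1 : ℝ) else -1) * t i}
        = (fun t => ∑ i, rsign (σ i) * t i) '' T := by
    intro σ
    rw [himg]
    rfl
  have key : (∑ σ : Fin N → Bool,
        sSup {r : ℝ | ∃ t ∈ T, r = ∑ i, (if σ i then (1 : ℝ) else -1) * φ (t i)})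
      ≤ L * ∑ σ : Fin N → Bool,
        sSup {r : ℝ | ∃ t ∈ T, r = ∑ i, (if σ i then (1 : ℝ) else -1) * t i} := by
    calc (∑ σ : Fin N → Bool,
          sSup {r : ℝ | ∃ t ∈ T, r = ∑ i, (if σ i then (1 : ℝ) else -1) * φ (t i)})
        = ∑ σ : Fin N → Bool, sSup ((fun t => ∑ i, rsign (σ i) * φ (t i)) '' T) := by
          apply Finset.sum_congr rfl
          intro σ _
          rw [hLHSset σ]
      _ ≤ ∑ σ : Fin N → Bool, sSup ((fun t => ∑ i, rsign (σ i) * ψS Finset.univ i (t i)) '' T) :=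
          hfin
      _ = ∑ σ : Fin N → Bool, L * sSup ((fun t => ∑ i, rsign (σ i) * t i) '' T) := by
          apply Finset.sum_congr rfl
          intro σ _
          exact hRHS σ
      _ = L * ∑ σ : Fin N → Bool, sSup ((fun t => ∑ i, rsign (σ i) * t i) '' T) := by
          rw [Finset.mul_sum]
      _ = L * ∑ σ : Fin N → Bool,
            sSup {r : ℝ | ∃ t ∈ T, r = ∑ i, (if σ i then (1 : ℝ) else -1) * t i} := by
          congr 1
          apply Finset.sum_congr rfl
          intro σ _
          rw [hRHSset σ]
  rw [mul_div_assoc']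
  gcongr
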